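/- For any Young diagram D (viewed as a subset of Z_{\geq 0}^2) and any non-negative integers a and l, the number of boxes c in D with arm length a(c) = a and leg length l(c) = l is exactly one less than the number of boxes c' in the complement (Z_{\geq 0})^2 \ D with arm length a and leg length l. -/
import Mathlib


/-- A Young diagram: a finite down-closed subset of ℕ². -/
def IsYoung (D : Finset (ℕ × ℕ)) : Prop :=
  ∀ x y x' y', (x, y) ∈ D → x' ≤ x → y' ≤ y → (x', y') ∈ D

/-- Arm length of a box inside the diagram. -/
def arm (D : Finset (ℕ × ℕ)) (c : ℕ × ℕ) : ℕ :=
  (D.filter fun d => d.2 = c.2 ∧ c.1 < d.1).card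

/-- Leg length of a box inside the diagram. -/
def leg (D : Finset (ℕ × ℕ)) (c : ℕ × ℕ) : ℕ :=
  (D.filter fun d => d.1 = c.1 ∧ c.2 < d.2).card

/-- Arm length of a box in the complement of the diagram. -/
def coArm (D : Finset (ℕ × ℕ)) (c : ℕ × ℕ) : ℕ :=
  ((Finset.range c.1).filter fun x' => (x', c.2) ∉ D).card

/-- Leg length of a box in the complement of the diagram. -/
def coLeg (D : Finset (ℕ × ℕ)) (c : ℕ × ℕ) : ℕ :=
  ((Finset.range c.2).filter fun y' => (c.1, y') ∉ D).card

namespace Hooks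
open Finset

lemma downclosed_eq_range (S : Finset ℕ) (h : ∀ x ∈ S, ∀ x' ≤ x, x' ∈ S) :
    S = Finset.range S.card := by
  have hsub : S ⊆ Finset.range S.card := by
    intro x hx
    rw [Finset.mem_range]
    have hss : Finset.range (x + 1) ⊆ S := by
      intro k hk
      exact h x hx k (Nat.lt_succ_iff.mp (Finset.mem_range.mp hk))
    have := Finset.card_le_card hss
    simpa using this
  exact Finset.eq_of_subset_of_card_le hsub (by simp)

noncomputable def row (D : Finset (ℕ × ℕ)) (y : ℕ) : ℕ :=
  (D.filter fun d => d.2 = y).card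

lemma mem_iff (D : Finset (ℕ × ℕ)) (hD : IsYoung D) (x y : ℕ) :
    (x, y) ∈ D ↔ x < row D y := by
  classical
  set S : Finset ℕ := (D.filter fun d => d.2 = y).image Prod.fst with hS
  have hcard : S.card = row D y := by
    rw [hS, row]
    apply Finset.card_image_of_injOn
    intro d1 h1 d2 h2 hf
    simp only [Finset.coe_filter, Set.mem_setOf_eq] at h1 h2
    exact Prod.ext hf (h1.2.trans h2.2.symm)
  have hmemS : ∀ x', x' ∈ S ↔ (x', y) ∈ D := by
    intro x'
    simp only [hS, Finset.mem_image, Finset.mem_filter]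
    constructor
    · rintro ⟨d, ⟨hd, hdy⟩, rfl⟩
      rw [← hdy]; exact hd
    · intro hd
      exact ⟨(x', y), ⟨hd, rfl⟩, rfl⟩
  have hdc : ∀ x ∈ S, ∀ x' ≤ x, x' ∈ S := by
    intro x hx x' hx'
    rw [hmemS] at hx ⊢
    exact hD x y x' y hx hx' le_rfl
  have := downclosed_eq_range S hdc
  rw [← hmemS, this, hcard, Finset.mem_range]

lemma row_anti (D : Finset (ℕ × ℕ)) (hD : IsYoung D) (y y' : ℕ) (h : y ≤ y') :
    row D y' ≤ row D y := by
  rcases Nat.eq_zero_or_pos (row D y') with h0 | h0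
  · omega
  · have : (row D y' - 1, y') ∈ D := (mem_iff D hD _ _).mpr (by omega)
    have : (row D y' - 1, y) ∈ D := hD _ _ _ _ this le_rfl h
    have := (mem_iff D hD _ _).mp this
    omega

lemma row_eq_zero (D : Finset (ℕ × ℕ)) {y : ℕ} (h : D.sup Prod.snd + 1 ≤ y) :
    row D y = 0 := by
  rw [row, Finset.card_eq_zero]
  ext d
  simp only [Finset.mem_filter, Finset.notMem_empty, iff_false, not_and]
  intro hd hdy
  have := Finset.le_sup (f := Prod.snd) hd
  omega

noncomputable def col (D : Finset (ℕ × ℕ)) (x : ℕ) : ℕ :=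
  ((Finset.range (D.sup Prod.snd + 1)).filter fun y => x < row D y).card

lemma lt_col_iff (D : Finset (ℕ × ℕ)) (hD : IsYoung D) (x y : ℕ) :
    y < col D x ↔ x < row D y := by
  classical
  set B := D.sup Prod.snd + 1 with hB
  set S := (Finset.range B).filter fun y => x < row D y with hS
  have hdc : ∀ y ∈ S, ∀ y' ≤ y, y' ∈ S := by
    intro y hy y' hy'
    simp only [hS, Finset.mem_filter, Finset.mem_range] at hy ⊢
    exact ⟨by omega, lt_of_lt_of_le hy.2 (row_anti D hD _ _ hy')⟩
  have heq := downclosed_eq_range S hdc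
  have hmem : ∀ y, y ∈ S ↔ x < row D y := by
    intro y
    simp only [hS, Finset.mem_filter, Finset.mem_range]
    constructor
    · exact fun h => h.2
    · intro h
      refine ⟨?_, h⟩
      by_contra hy
      rw [row_eq_zero D (by omega)] at h
      omega
  rw [← hmem, heq, Finset.mem_range]
  rfl

lemma col_le (D : Finset (ℕ × ℕ)) (x : ℕ) : col D x ≤ D.sup Prod.snd + 1 := by
  calc col D x ≤ (Finset.range (D.sup Prod.snd + 1)).card := Finset.card_le_card (Finset.filter_subset _ _)
  _ = _ := Finset.card_range _



variable (D : Finset (ℕ × ℕ))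

lemma arm_eq (hD : IsYoung D) (x y : ℕ) :
    arm D (x, y) = row D y - (x + 1) := by
  classical
  rw [arm]
  have : (D.filter fun d => d.2 = (x, y).2 ∧ (x, y).1 < d.1)
      = (Finset.Ico (x + 1) (row D y)).image (fun x' => (x', y)) := by
    ext d
    simp only [Finset.mem_filter, Finset.mem_image, Finset.mem_Ico]
    constructor
    · rintro ⟨hd, hdy, hxd⟩
      refine ⟨d.1, ⟨by omega, ?_⟩, ?_⟩
      · rw [← mem_iff D hD, ← hdy]; exact hd
      · rw [← hdy]
    · rintro ⟨x', ⟨h1, h2⟩, rfl⟩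
      exact ⟨(mem_iff D hD _ _).mpr h2, rfl, by omega⟩
  rw [this, Finset.card_image_of_injective _ (fun a b h => (Prod.mk.injEq _ _ _ _).mp h |>.1),
    Nat.card_Ico]

lemma leg_eq (hD : IsYoung D) (x y : ℕ) :
    leg D (x, y) = col D x - (y + 1) := by
  classical
  rw [leg]
  have : (D.filter fun d => d.1 = (x, y).1 ∧ (x, y).2 < d.2)
      = (Finset.Ico (y + 1) (col D x)).image (fun y' => (x, y')) := by
    ext d
    simp only [Finset.mem_filter, Finset.mem_image, Finset.mem_Ico]
    constructor
    · rintro ⟨hd, hdx, hyd⟩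
      refine ⟨d.2, ⟨by omega, ?_⟩, ?_⟩
      · rw [lt_col_iff D hD, ← mem_iff D hD, ← hdx]; exact hd
      · rw [← hdx]
    · rintro ⟨y', ⟨h1, h2⟩, rfl⟩
      rw [lt_col_iff D hD] at h2
      exact ⟨(mem_iff D hD _ _).mpr h2, rfl, by omega⟩
  rw [this, Finset.card_image_of_injective _ (fun a b h => (Prod.mk.injEq _ _ _ _).mp h |>.2),
    Nat.card_Ico]

lemma coArm_eq (hD : IsYoung D) (x y : ℕ) :
    coArm D (x, y) = x - row D y := by
  classical
  rw [coArm]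
  have : ((Finset.range (x, y).1).filter fun x' => (x', (x, y).2) ∉ D)
      = Finset.Ico (row D y) x := by
    ext k
    simp only [Finset.mem_filter, Finset.mem_range, Finset.mem_Ico, mem_iff D hD]
    omega
  rw [this, Nat.card_Ico]

lemma coLeg_eq (hD : IsYoung D) (x y : ℕ) :
    coLeg D (x, y) = y - col D x := by
  classical
  rw [coLeg]
  have : ((Finset.range (x, y).2).filter fun y' => ((x, y).1, y') ∉ D)
      = Finset.Ico (col D x) y := by
    ext k
    simp only [Finset.mem_filter, Finset.mem_range, Finset.mem_Ico, mem_iff D hD,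
      ← lt_col_iff D hD]
    omega
  rw [this, Nat.card_Ico]

end Hooks


open Finset in
lemma key_count (g h : ℕ → Prop) [DecidablePred g] [DecidablePred h]
    (hgh : ∀ z, h z → g z) (hgh' : ∀ z, h z → g (z + 1)) (n : ℕ) :
    ((Finset.range (n + 1)).filter (fun z => g z ∧ (z = 0 ∨ ¬ h (z - 1)))).card
      = ((Finset.range (n + 1)).filter (fun y => g y ∧ ¬ h y)).card
        + (if h n then 1 else 0) := by
  induction n with
  | zero =>
    rw [Finset.range_one, Finset.filter_singleton, Finset.filter_singleton]
    by_cases hg0 : g 0 <;> by_cases hh0 : h 0 <;>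
      simp_all [hgh 0]
  | succ n ih =>
    rw [Finset.range_add_one, Finset.filter_insert, Finset.filter_insert,
      apply_ite Finset.card, apply_ite Finset.card]
    have m1 : (n+1) ∉ (Finset.range (n+1)).filter (fun z => g z ∧ (z = 0 ∨ ¬ h (z - 1))) := by
      simp
    have m2 : (n+1) ∉ (Finset.range (n+1)).filter (fun y => g y ∧ ¬ h y) := by simp
    rw [Finset.card_insert_of_notMem m1, Finset.card_insert_of_notMem m2, ih]
    have hg1 := hgh (n + 1)
    have hg2 := hgh' n
    by_cases hc : g (n + 1) <;> by_cases ha : h n <;> by_cases hb : h (n + 1) <;>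
      simp_all

open Finset in
theorem hooks_inside_outside (D : Finset (ℕ × ℕ)) (hD : IsYoung D) (a l : ℕ) :
    {c : ℕ × ℕ | c ∉ D ∧ coArm D c = a ∧ coLeg D c = l}.ncard
      = (D.filter fun c => arm D c = a ∧ leg D c = l).card + 1 := by
  classical
  set B := D.sup Prod.snd + 1 with hB
  set N := B + l with hN
  set g : ℕ → Prop := fun z => Hooks.row D z ≤ Hooks.row D (z + l) + a with hg
  set h : ℕ → Prop := fun z => Hooks.row D z ≤ Hooks.row D (z + l + 1) + a with hh
  have anti := Hooks.row_anti D hD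
  have hzero : ∀ y, B ≤ y → Hooks.row D y = 0 := fun y hy => Hooks.row_eq_zero D hy
  have hpos : ∀ y, 0 < Hooks.row D y → y < B := by
    intro y hy
    by_contra hc
    rw [hzero y (by omega)] at hy
    omega
  have hgh : ∀ z, h z → g z := by
    intro z hz
    have := anti (z + l) (z + l + 1) (by omega)
    simp only [hg, hh] at *
    omega
  have hgh' : ∀ z, h z → g (z + 1) := by
    intro z hz
    have := anti z (z + 1) (by omega)
    simp only [hg, hh] at *
    have e : z + 1 + l = z + l + 1 := by omega
    rw [e]
    omega
  have hhN : h N := by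
    simp only [hh]
    rw [hzero N (by omega)]
    omega
  -- inside count
  have inside_eq : (D.filter fun c => arm D c = a ∧ leg D c = l)
      = ((Finset.range (N + 1)).filter (fun y => g y ∧ ¬ h y)).image
          (fun y => (Hooks.row D y - (a + 1), y)) := by
    ext c
    obtain ⟨x, y⟩ := c
    simp only [Finset.mem_filter, Finset.mem_image, Finset.mem_range]
    rw [Hooks.mem_iff D hD, Hooks.arm_eq D hD, Hooks.leg_eq D hD]
    have e0 := Hooks.lt_col_iff D hD x y
    have e1 := Hooks.lt_col_iff D hD x (y + l)
    have e2 := Hooks.lt_col_iff D hD x (y + l + 1)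
    constructor
    · rintro ⟨hxy, harm, hleg⟩
      refine ⟨y, ⟨?_, ?_, ?_⟩, ?_⟩
      · have := hpos y (by omega)
        omega
      · simp only [hg]; omega
      · simp only [hh]; omega
      · have : x = Hooks.row D y - (a + 1) := by omega
        rw [← this]
    · rintro ⟨y', ⟨hy'N, hgy, hhy⟩, hpair⟩
      injection hpair with hx hy
      subst hy
      subst hx
      simp only [hg] at hgy
      simp only [hh] at hhy
      have h1 := anti y' (y' + l) (by omega)
      have h2 := anti (y' + l) (y' + l + 1) (by omega)
      omega
  have inside_card : (D.filter fun c => arm D c = a ∧ leg D c = l).card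
      = ((Finset.range (N + 1)).filter (fun y => g y ∧ ¬ h y)).card := by
    rw [inside_eq]
    exact Finset.card_image_of_injective _ (fun a b hab => congrArg Prod.snd hab)
  -- outside count
  have outside_eq : {c : ℕ × ℕ | c ∉ D ∧ coArm D c = a ∧ coLeg D c = l}
      = (fun z => (Hooks.row D (z + l) + a, z + l)) ''
          {z | g z ∧ (z = 0 ∨ ¬ h (z - 1))} := by
    ext c
    obtain ⟨x, y⟩ := c
    simp only [Set.mem_setOf_eq, Set.mem_image]
    rw [Hooks.mem_iff D hD, Hooks.coArm_eq D hD, Hooks.coLeg_eq D hD]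
    have e0 := Hooks.lt_col_iff D hD x y
    constructor
    · rintro ⟨hxy, harm, hleg⟩
      have hcolx : Hooks.col D x ≤ y := by omega
      have hyl : l ≤ y := by omega
      refine ⟨y - l, ⟨?_, ?_⟩, ?_⟩
      · -- g (y - l)
        have ezl : y - l + l = y := by omega
        have e3 := Hooks.lt_col_iff D hD x (y - l)
        simp only [hg, ezl]
        omega
      · rcases Nat.eq_zero_or_pos (y - l) with hz | hz
        · left; exact hz
        · right
          have e4 := Hooks.lt_col_iff D hD x (y - l - 1)
          simp only [hh]
          have ezl : y - l - 1 + l + 1 = y := by omega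
          rw [ezl]
          omega
      · have ezl : y - l + l = y := by omega
        rw [ezl]
        have : Hooks.row D y + a = x := by omega
        rw [this]
    · rintro ⟨z, ⟨hgz, hz0⟩, hpair⟩
      injection hpair with hx hy
      subst hy
      subst hx
      simp only [hg] at hgz
      have e3 := Hooks.lt_col_iff D hD (Hooks.row D (z + l) + a) z
      have hcol1 : Hooks.col D (Hooks.row D (z + l) + a) ≤ z := by omega
      have hcol2 : z ≤ Hooks.col D (Hooks.row D (z + l) + a) := by
        rcases hz0 with hz0 | hz0
        · omega
        · rcases Nat.eq_zero_or_pos z with hzz | hzz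
          · omega
          have e4 := Hooks.lt_col_iff D hD (Hooks.row D (z + l) + a) (z - 1)
          simp only [hh] at hz0
          have ezl : z - 1 + l + 1 = z + l := by omega
          rw [ezl] at hz0
          have h1 := anti z (z + l) (by omega)
          omega
      refine ⟨by omega, by omega, by omega⟩
  have outside_card : {c : ℕ × ℕ | c ∉ D ∧ coArm D c = a ∧ coLeg D c = l}.ncard
      = ((Finset.range (N + 1)).filter (fun z => g z ∧ (z = 0 ∨ ¬ h (z - 1)))).card := by
    rw [outside_eq]
    rw [Set.ncard_image_of_injective _ (fun z1 z2 hz =>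
      by have := congrArg Prod.snd hz; simpa using this)]
    have hset : {z | g z ∧ (z = 0 ∨ ¬ h (z - 1))}
        = ↑((Finset.range (N + 1)).filter (fun z => g z ∧ (z = 0 ∨ ¬ h (z - 1)))) := by
      ext z
      simp only [Set.mem_setOf_eq, Finset.coe_filter, Finset.mem_range]
      constructor
      · rintro ⟨hgz, hz0⟩
        refine ⟨?_, hgz, hz0⟩
        rcases hz0 with hz0 | hz0
        · omega
        · simp only [hh] at hz0
          have hr : 0 < Hooks.row D (z - 1) := by omega
          have := hpos _ hr
          omega
      · rintro ⟨-, hgz, hz0⟩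
        exact ⟨hgz, hz0⟩
    rw [hset, Set.ncard_coe_finset]
  rw [outside_card, inside_card]
  have := key_count g h hgh hgh' N
  rw [this, if_pos hhN]
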